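/- Let x = x₄ b₄ a^{k₃} x₅ b₁ a^{k₁} be a string of length m, where x₄, x₅ ∈ Σ*, a, b₁, b₄ ∈ Σ with b₁ ≠ a and b₄ ≠ a, and k₁, k₃ ≥ 1 are integers with k₃ > k₁. Let r₃ = |x₄ b₄ a^{k₃}| - 1. Then good-suff[m-1-suff[r₃]] ≤ m-1-r₃. -/

import Mathlib

/-- `suffT x i` is the length of the longest common suffix of `x` and `x[0..i]`,
i.e. the largest `k` with `0 ≤ k ≤ i+1` such that `x[i-k+1..i] = x[m-k..m-1]`. -/
def suffT {α : Type*} [DecidableEq α] (x : List α) (i : ℕ) : ℕ :=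
  Nat.findGreatest
    (fun k => (x.take (i + 1)).drop (i + 1 - k) = x.drop (x.length - k)) (i + 1)

/-- `Cond-suf(i,d)`: either `0 < d ≤ i+1` and `x[i-d+1..m-d-1]` is a suffix of `x`,
or `i+1 < d` and `x[0..m-d-1]` is a suffix of `x`. -/
def CondSuf {α : Type*} (x : List α) (i d : ℕ) : Prop :=
  (0 < d ∧ d ≤ i + 1 ∧ (x.drop (i + 1 - d)).take (x.length - 1 - i) <:+ x) ∨
  (i + 1 < d ∧ x.take (x.length - d) <:+ x)

/-- `Cond-occ(i,d)`: either `0 < d ≤ i` and `x[i-d] ≠ x[i]`, or `i < d`. -/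
def CondOcc {α : Type*} (x : List α) (i d : ℕ) : Prop :=
  (0 < d ∧ d ≤ i ∧ x[i - d]? ≠ x[i]?) ∨ i < d

/-- `goodSuff x i = min { d | Cond-suf(i,d) and Cond-occ(i,d) }`. -/
noncomputable def goodSuff {α : Type*} (x : List α) (i : ℕ) : ℕ :=
  sInf {d | CondSuf x i d ∧ CondOcc x i d}

/-- Let `x = x₄ b₄ a^{k₃} x₅ b₁ a^{k₁}` with `b₁ ≠ a`, `b₄ ≠ a`,
`k₁, k₃ ≥ 1`, `k₃ > k₁`. Let `r₃ = |x₄ b₄ a^{k₃}| - 1`.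
Then `good-suff[m-1-suff[r₃]] ≤ m-1-r₃`. -/
theorem statement8 {α : Type*} [DecidableEq α] (x₄ x₅ : List α) (a b₁ b₄ : α) (k₁ k₃ : ℕ)
    (hb₁ : b₁ ≠ a) (hb₄ : b₄ ≠ a) (hk₁ : 1 ≤ k₁) (hk₃ : 1 ≤ k₃) (hkk : k₃ > k₁)
    (x : List α)
    (hx : x = x₄ ++ [b₄] ++ List.replicate k₃ a ++ x₅ ++ [b₁] ++ List.replicate k₁ a) :
    goodSuff x (x.length - 1 - suffT x ((x₄.length + 1) + k₃ - 1)) ≤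
      x.length - 1 - ((x₄.length + 1) + k₃ - 1) := by
  set p := x₄.length with hp
  set q := x₅.length with hq
  have hm : x.length = p + 1 + k₃ + q + 1 + k₁ := by
    simp [hx]; omega
  have hr : (p + 1) + k₃ - 1 = p + k₃ := by omega
  rw [hr]
  -- useful decompositions of x
  have h1 : x = (x₄ ++ [b₄]) ++ (List.replicate k₃ a ++ (x₅ ++ ([b₁] ++ List.replicate k₁ a))) := by
    simp [hx]
  have h2 : x = (x₄ ++ [b₄] ++ List.replicate k₃ a ++ x₅ ++ [b₁]) ++ List.replicate k₁ a := hx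
  have h3 : x = (x₄ ++ [b₄] ++ List.replicate k₃ a ++ x₅) ++ ([b₁] ++ List.replicate k₁ a) := by
    simp [hx]
  have h4 : x = (x₄ ++ [b₄] ++ List.replicate k₃ a) ++ (x₅ ++ [b₁] ++ List.replicate k₁ a) := by
    simp [hx]
  -- elementwise facts
  have ha : ∀ j, j < k₃ → x[p + 1 + j]? = some a := by
    intro j hj
    rw [h1, List.getElem?_append_right (by simp; omega)]
    rw [show p + 1 + j - (x₄ ++ [b₄]).length = j by simp; omega]
    simp [List.getElem?_append, hj]
  have hb : x[p + 1 + k₃ + q]? = some b₁ := by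
    rw [h3, List.getElem?_append_right (by simp; omega)]
    have : p + 1 + k₃ + q - (x₄ ++ [b₄] ++ List.replicate k₃ a ++ x₅).length = 0 := by
      simp; omega
    rw [this]; simp
  -- drop of last k₁ letters
  have hdrop : x.drop (x.length - k₁) = List.replicate k₁ a := by
    rw [h2]
    exact List.drop_left' (by simp [hm]; omega)
  -- take of first p+k₃+1 letters
  have htake : x.take (p + k₃ + 1) = x₄ ++ [b₄] ++ List.replicate k₃ a := by
    rw [h4]
    exact List.take_left' (by simp; omega)
  -- compute suffT
  have hsuff : suffT x (p + k₃) = k₁ := by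
    rw [suffT, Nat.findGreatest_eq_iff]
    refine ⟨by omega, fun _ => ?_, fun n hn1 hn2 hP => ?_⟩
    · -- P k₁
      simp only [htake]
      have : p + k₃ + 1 - k₁ = (x₄ ++ [b₄]).length + (k₃ - k₁) := by simp; omega
      rw [hdrop, show x₄ ++ [b₄] ++ List.replicate k₃ a
            = (x₄ ++ [b₄]) ++ List.replicate k₃ a by simp, this,
          List.drop_length_add_append, List.drop_replicate]
      congr 1; omega
    · -- ¬ P n for k₁ < n ≤ p + k₃ + 1
      have := congrArg (fun l => l[n - 1 - k₁]?) hP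
      simp only [List.getElem?_drop, List.getElem?_take] at this
      rw [show p + k₃ + 1 - n + (n - 1 - k₁) = p + 1 + (k₃ - k₁ - 1) by omega,
          show x.length - n + (n - 1 - k₁) = p + 1 + k₃ + q by omega,
          ha _ (by omega), hb, if_pos (by omega)] at this
      exact hb₁ (Option.some.inj this).symm
  rw [hsuff]
  -- now prove goodSuff bound
  apply Nat.sInf_le
  have hd : x.length - 1 - (p + k₃) = q + 1 + k₁ := by omega
  have hi : x.length - 1 - k₁ = p + 1 + k₃ + q := by omega
  constructor
  · -- CondSuf
    left
    refine ⟨by omega, by omega, ?_⟩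
    have e1 : x.length - 1 - k₁ + 1 - (x.length - 1 - (p + k₃)) = (x₄ ++ [b₄]).length + (k₃ - k₁) := by
      simp; omega
    have e2 : x.length - 1 - (x.length - 1 - k₁) = k₁ := by omega
    have key : List.take k₁ (List.drop ((x₄ ++ [b₄]).length + (k₃ - k₁)) x)
        = List.replicate k₁ a := by
      conv_lhs => rw [h1]
      rw [List.drop_length_add_append,
          show List.replicate k₃ a = List.replicate (k₃ - k₁) a ++ List.replicate k₁ a by
            rw [← List.replicate_add]; congr 1; omega,
          List.append_assoc, List.drop_left' (by simp), List.take_left' (by simp)]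
    rw [e1, e2, key]
    exact ⟨x₄ ++ [b₄] ++ List.replicate k₃ a ++ x₅ ++ [b₁], h2.symm⟩
  · -- CondOcc
    left
    refine ⟨by omega, by omega, ?_⟩
    rw [show x.length - 1 - k₁ - (x.length - 1 - (p + k₃)) = p + 1 + (k₃ - k₁ - 1) by omega,
        hi, ha _ (by omega), hb]
    intro h
    exact hb₁ (Option.some.inj h).symm
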